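/- Let (β_t)_{t=0}^∞ be a real sequence with Σ_{t=0}^∞ |β_t| < ∞ and let 0 < a < 1. Define B(ω) = Σ_{t=0}^∞ β_t e^{iωt} (the series converges absolutely for every ω) and S = Σ_{t=0}^∞ Σ_{τ=0}^∞ β_t β_τ (1 − a)^{|t−τ|} (an absolutely convergent double series). Then (1/2)·S ≤ (a/(2π)) · ∫_{−π}^{π} |B(ω)|² / |1 − a − e^{iω}|² dω ≤ S. -/

import Mathlib

open MeasureTheory Real
open scoped ENNReal NNReal


lemma J_eq (m : ℤ) : ∫ ω in Set.Icc (-π) π, Real.cos (m * ω) =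
    if m = 0 then 2 * π else 0 := by
  rw [MeasureTheory.integral_Icc_eq_integral_Ioc,
    ← intervalIntegral.integral_of_le (by linarith [pi_pos] : -π ≤ π)]
  rcases eq_or_ne m 0 with h | h
  · simp [h]; ring
  · rw [if_neg h]
    have hm : (m : ℝ) ≠ 0 := Int.cast_ne_zero.mpr h
    have h2 := intervalIntegral.integral_comp_mul_left (a := -π) (b := π) (fun x => Real.cos x) hm
    have h3 : Real.sin (m * π) = 0 := by simp [Real.sin_int_mul_pi m]
    simp only [integral_cos] at h2
    rw [h2, mul_neg, Real.sin_neg, h3]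
    simp


lemma poisson (b : ℝ) (hb0 : 0 < b) (hb1 : b < 1) (ω : ℝ) :
    HasSum (fun k : ℤ => b ^ k.natAbs * Real.cos (k * ω))
      ((1 - b ^ 2) / (1 + b ^ 2 - 2 * b * Real.cos ω)) := by
  set E : ℂ := Complex.exp (Complex.I * ω) with hE
  set z : ℂ := (b : ℂ) * E with hz
  have hEnorm : ‖E‖ = 1 := by
    simp [hE, Complex.norm_exp]
  have hznorm : ‖z‖ = b := by
    rw [hz, norm_mul, hEnorm, mul_one, Complex.norm_real, Real.norm_eq_abs, abs_of_pos hb0]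
  have hzlt : ‖z‖ < 1 := by rw [hznorm]; exact hb1
  have hwlt : ‖(starRingEnd ℂ) z‖ < 1 := by rwa [RCLike.norm_conj]
  -- geometric sums
  have h1 : HasSum (fun n : ℕ => z ^ n) (1 - z)⁻¹ := hasSum_geometric_of_norm_lt_one hzlt
  have h2' : HasSum (fun n : ℕ => ((starRingEnd ℂ) z) ^ n) (1 - (starRingEnd ℂ) z)⁻¹ :=
    hasSum_geometric_of_norm_lt_one hwlt
  have h2 : HasSum (fun n : ℕ => ((starRingEnd ℂ) z) ^ (n + 1))
      ((starRingEnd ℂ) z * (1 - (starRingEnd ℂ) z)⁻¹) := by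
    simpa [pow_succ, mul_comm] using h2'.mul_left ((starRingEnd ℂ) z)
  -- the ℤ-indexed complex sum
  set F : ℤ → ℂ := fun k => (b : ℂ) ^ k.natAbs * Complex.exp (Complex.I * ((k : ℝ) * ω : ℝ)) with hF
  have hFnat : ∀ n : ℕ, F (n : ℤ) = z ^ n := by
    intro n
    simp only [hF, hz, hE, Int.natAbs_natCast, mul_pow, ← Complex.exp_nat_mul]
    push_cast
    ring_nf
  have hFneg : ∀ n : ℕ, F (-(n + 1) : ℤ) = ((starRingEnd ℂ) z) ^ (n + 1) := by
    intro n
    have hcz : (starRingEnd ℂ) z = (b : ℂ) * Complex.exp (-(Complex.I * ω)) := by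
      rw [hz, map_mul, Complex.conj_ofReal, ← Complex.exp_conj]
      congr 1
      simp [map_mul, Complex.conj_ofReal]
    rw [hcz]
    have h3 : (-(n + 1 : ℕ) : ℤ).natAbs = n + 1 := by omega
    simp only [hF, h3, mul_pow, ← Complex.exp_nat_mul]
    congr 1
    congr 1
    push_cast
    ring
  have hFsum : HasSum F ((1 - z)⁻¹ + (starRingEnd ℂ) z * (1 - (starRingEnd ℂ) z)⁻¹) := by
    refine HasSum.of_nat_of_neg_add_one ?_ ?_
    · simpa only [hFnat] using h1
    · convert h2 using 2 with n
      exact hFneg n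
  -- evaluate the sum
  have hz1 : (1 : ℂ) - z ≠ 0 := by
    intro h
    have : z = 1 := by linear_combination -h
    rw [this] at hzlt; simp at hzlt
  have hw1 : (1 : ℂ) - (starRingEnd ℂ) z ≠ 0 := by
    intro h
    have : (starRingEnd ℂ) z = 1 := by linear_combination -h
    rw [this] at hwlt; simp at hwlt
  have hzw : z * (starRingEnd ℂ) z = ((b ^ 2 : ℝ) : ℂ) := by
    rw [Complex.mul_conj]
    norm_cast
    rw [Complex.normSq_eq_norm_sq, hznorm]
  have hre : z.re = b * Real.cos ω := by
    rw [hz, Complex.re_ofReal_mul, hE, mul_comm Complex.I, Complex.exp_ofReal_mul_I_re]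
  have hadd : z + (starRingEnd ℂ) z = ((2 * b * Real.cos ω : ℝ) : ℂ) := by
    rw [Complex.add_conj, hre]; push_cast; ring
  have hD : ((1 : ℂ) - z) * (1 - (starRingEnd ℂ) z) = ((1 + b ^ 2 - 2 * b * Real.cos ω : ℝ) : ℂ) := by
    have e : ((1 : ℂ) - z) * (1 - (starRingEnd ℂ) z) = 1 - (z + (starRingEnd ℂ) z) + z * (starRingEnd ℂ) z := by
      ring
    rw [e, hadd, hzw]; push_cast; ring
  have hS : (1 - z)⁻¹ + (starRingEnd ℂ) z * (1 - (starRingEnd ℂ) z)⁻¹ =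
      (((1 - b ^ 2) / (1 + b ^ 2 - 2 * b * Real.cos ω) : ℝ) : ℂ) := by
    have e : (1 - z)⁻¹ + (starRingEnd ℂ) z * (1 - (starRingEnd ℂ) z)⁻¹ =
        (1 - z * (starRingEnd ℂ) z) / (((1 : ℂ) - z) * (1 - (starRingEnd ℂ) z)) := by
      field_simp
      ring
    rw [e, hzw, hD]
    push_cast
    ring
  rw [hS] at hFsum
  have hreS := Complex.hasSum_re hFsum
  simp only [Complex.ofReal_re] at hreS
  convert hreS using 2 with k
  simp only [hF]
  rw [← Complex.ofReal_pow, mul_comm Complex.I, Complex.re_ofReal_mul,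
    Complex.exp_ofReal_mul_I_re]


lemma norm_tsum_sq (g : ℕ → ℂ) (hg : Summable fun t => ‖g t‖) :
    HasSum (fun p : ℕ × ℕ => (g p.1 * (starRingEnd ℂ) (g p.2)).re) (‖∑' t, g t‖ ^ 2) := by
  have hgs : Summable g := hg.of_norm
  have hB : HasSum g (∑' t, g t) := hgs.hasSum
  have hBc : HasSum (fun t => (starRingEnd ℂ) (g t)) ((starRingEnd ℂ) (∑' t, g t)) :=
    Complex.hasSum_conj'.mpr hB
  have hgc : Summable fun t => ‖(starRingEnd ℂ) (g t)‖ := by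
    simpa only [RCLike.norm_conj] using hg
  have hs2 : Summable (fun p : ℕ × ℕ => g p.1 * (starRingEnd ℂ) (g p.2)) :=
    summable_mul_of_summable_norm (f := g) (g := fun t => (starRingEnd ℂ) (g t)) hg hgc
  have hmul : HasSum (fun p : ℕ × ℕ => g p.1 * (starRingEnd ℂ) (g p.2))
      ((∑' t, g t) * (starRingEnd ℂ) (∑' t, g t)) := HasSum.mul (f := g) (g := fun t => (starRingEnd ℂ) (g t)) hB hBc hs2
  have hval : ((∑' t, g t) * (starRingEnd ℂ) (∑' t, g t)).re = ‖∑' t, g t‖ ^ 2 := by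
    rw [Complex.mul_conj]
    simp only [Complex.ofReal_re]
    exact Complex.normSq_eq_norm_sq _
  rw [← hval]
  exact Complex.hasSum_re hmul

lemma I_eq (b : ℝ) (hb0 : 0 < b) (hb1 : b < 1) (n : ℤ) :
    ∫ ω in Set.Icc (-π) π, Real.cos (n * ω) / (1 + b ^ 2 - 2 * b * Real.cos ω) =
      2 * π * b ^ n.natAbs / (1 - b ^ 2) := by
  have hb2 : 0 < 1 - b ^ 2 := by nlinarith
  have hDpos : ∀ ω : ℝ, 0 < 1 + b ^ 2 - 2 * b * Real.cos ω := by
    intro ω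
    nlinarith [Real.cos_le_one ω, Real.neg_one_le_cos ω]
  set c : ℝ := 1 / (1 - b ^ 2) with hc
  have hc0 : 0 < c := by positivity
  set f : ℤ → ℝ → ℝ := fun k ω => c * b ^ k.natAbs * (Real.cos (n * ω) * Real.cos (k * ω))
    with hf
  have hsum_b : Summable fun k : ℤ => b ^ k.natAbs := by
    simpa using (poisson b hb0 hb1 0).summable
  have hpt : ∀ ω : ℝ, Real.cos (n * ω) / (1 + b ^ 2 - 2 * b * Real.cos ω) = ∑' k : ℤ, f k ω := by
    intro ω
    have h1 : ∑' k : ℤ, (c * Real.cos (n * ω)) * (b ^ k.natAbs * Real.cos (k * ω)) =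
        (c * Real.cos (n * ω)) * ((1 - b ^ 2) / (1 + b ^ 2 - 2 * b * Real.cos ω)) := by
      rw [tsum_mul_left, (poisson b hb0 hb1 ω).tsum_eq]
    have h2 : ∀ k : ℤ, f k ω = (c * Real.cos (n * ω)) * (b ^ k.natAbs * Real.cos (k * ω)) := by
      intro k; simp only [hf]; ring
    rw [tsum_congr h2, h1, hc]
    field_simp
  have hmeas : ∀ k : ℤ, AEStronglyMeasurable (f k) (volume.restrict (Set.Icc (-π) π)) := by
    intro k
    exact (Continuous.aestronglyMeasurable (by fun_prop)).restrict
  have hbound : ∑' k : ℤ, ∫⁻ ω in Set.Icc (-π) π, ‖f k ω‖₊ ∂volume ≠ ⊤ := by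
    have h1 : ∀ k : ℤ, ∫⁻ ω in Set.Icc (-π) π, ‖f k ω‖₊ ∂volume ≤
        ENNReal.ofReal ((c * b ^ k.natAbs) * (2 * π)) := by
      intro k
      have hb : ∀ ω : ℝ, (‖f k ω‖₊ : ℝ≥0∞) ≤ ENNReal.ofReal (c * b ^ k.natAbs) := by
        intro ω
        rw [← ENNReal.ofReal_coe_nnreal, coe_nnnorm]
        apply ENNReal.ofReal_le_ofReal
        simp only [hf, Real.norm_eq_abs, abs_mul]
        have h2 : |Real.cos (n * ω)| * |Real.cos (k * ω)| ≤ 1 :=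
          mul_le_one₀ (Real.abs_cos_le_one _) (abs_nonneg _) (Real.abs_cos_le_one _)
        calc |c| * |(b : ℝ) ^ k.natAbs| * (|Real.cos (n * ω)| * |Real.cos (k * ω)|)
            ≤ |c| * |(b : ℝ) ^ k.natAbs| * 1 :=
              mul_le_mul_of_nonneg_left h2 (by positivity)
          _ = c * b ^ k.natAbs := by
              rw [mul_one, abs_of_pos hc0, abs_of_pos (by positivity)]
      calc ∫⁻ ω in Set.Icc (-π) π, ‖f k ω‖₊ ∂volume
          ≤ ∫⁻ _ in Set.Icc (-π) π, ENNReal.ofReal (c * b ^ k.natAbs) ∂volume :=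
            lintegral_mono fun ω => hb ω
        _ = ENNReal.ofReal (c * b ^ k.natAbs) * volume (Set.Icc (-π) π) :=
            setLIntegral_const _ _
        _ = ENNReal.ofReal ((c * b ^ k.natAbs) * (2 * π)) := by
            rw [Real.volume_Icc, show π - -π = 2 * π by ring,
              ← ENNReal.ofReal_mul (by positivity)]
    refine ne_top_of_le_ne_top ?_ (ENNReal.tsum_le_tsum h1)
    rw [← ENNReal.ofReal_tsum_of_nonneg (fun k => by positivity)
      (by exact (hsum_b.mul_left c).mul_right (2 * π))]
    exact ENNReal.ofReal_ne_top
  have hswap : ∫ ω in Set.Icc (-π) π, (∑' k : ℤ, f k ω) ∂volume =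
      ∑' k : ℤ, ∫ ω in Set.Icc (-π) π, f k ω ∂volume :=
    integral_tsum hmeas hbound
  have hint_cos : ∀ m : ℤ, IntegrableOn (fun ω => Real.cos (m * ω)) (Set.Icc (-π) π) volume := by
    intro m
    exact (Continuous.integrableOn_Icc (by fun_prop))
  have hI : ∀ k : ℤ, ∫ ω in Set.Icc (-π) π, f k ω ∂volume =
      (if k = n then π * b ^ n.natAbs / (1 - b ^ 2) else 0) +
      (if k = -n then π * b ^ n.natAbs / (1 - b ^ 2) else 0) := by
    intro k
    have hcc : ∀ ω : ℝ, f k ω =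
        (c * b ^ k.natAbs / 2) * Real.cos ((n - k : ℤ) * ω) +
        (c * b ^ k.natAbs / 2) * Real.cos ((n + k : ℤ) * ω) := by
      intro ω
      have e : Real.cos (n * ω) * Real.cos (k * ω) =
          (Real.cos ((n : ℝ) * ω - (k : ℝ) * ω) + Real.cos ((n : ℝ) * ω + (k : ℝ) * ω)) / 2 := by
        rw [Real.cos_sub, Real.cos_add]
        ring
      simp only [hf, e]
      push_cast
      ring_nf
    rw [setIntegral_congr_fun measurableSet_Icc (fun ω _ => hcc ω)]
    rw [integral_add ((hint_cos (n - k)).const_mul _) ((hint_cos (n + k)).const_mul _),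
      MeasureTheory.integral_const_mul, MeasureTheory.integral_const_mul, J_eq, J_eq]
    congr 1
    · by_cases hkn : k = n
      · subst hkn
        rw [if_pos (by ring), if_pos rfl, hc]
        field_simp
      · rw [if_neg (by omega), if_neg hkn, mul_zero]
    · by_cases hkn : k = -n
      · subst hkn
        rw [if_pos (by ring), if_pos rfl, hc]
        have : (-n : ℤ).natAbs = n.natAbs := by omega
        rw [this]
        field_simp
      · rw [if_neg (by omega), if_neg hkn, mul_zero]
  have hfinal : ∑' k : ℤ, ∫ ω in Set.Icc (-π) π, f k ω ∂volume =
      2 * π * b ^ n.natAbs / (1 - b ^ 2) := by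
    rw [tsum_congr hI, Summable.tsum_add (hasSum_ite_eq n _).summable (hasSum_ite_eq (-n) _).summable,
      tsum_ite_eq, tsum_ite_eq]
    ring
  rw [setIntegral_congr_fun measurableSet_Icc (fun ω _ => hpt ω), hswap, hfinal]

set_option maxHeartbeats 1000000 in
theorem integral_main_bounds (β : ℕ → ℝ) (hβ : Summable fun t => |β t|)
    (a : ℝ) (ha0 : 0 < a) (ha1 : a < 1) :
    (∀ ω : ℝ, Summable fun t : ℕ =>
        ‖(β t : ℂ) * Complex.exp (Complex.I * (ω : ℂ) * (t : ℂ))‖) ∧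
    Summable (fun p : ℕ × ℕ =>
        |β p.1 * β p.2 * (1 - a) ^ ((p.1 : ℤ) - (p.2 : ℤ)).natAbs|) ∧
    (1 / 2) * (∑' t : ℕ, ∑' τ : ℕ, β t * β τ * (1 - a) ^ ((t : ℤ) - (τ : ℤ)).natAbs)
        ≤ (a / (2 * π)) *
          (∫ ω in Set.Icc (-π) π,
            ‖∑' t : ℕ, (β t : ℂ) * Complex.exp (Complex.I * (ω : ℂ) * (t : ℂ))‖ ^ 2 /
              ‖(1 : ℂ) - (a : ℂ) - Complex.exp (Complex.I * (ω : ℂ))‖ ^ 2) ∧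
    (a / (2 * π)) *
          (∫ ω in Set.Icc (-π) π,
            ‖∑' t : ℕ, (β t : ℂ) * Complex.exp (Complex.I * (ω : ℂ) * (t : ℂ))‖ ^ 2 /
              ‖(1 : ℂ) - (a : ℂ) - Complex.exp (Complex.I * (ω : ℂ))‖ ^ 2)
        ≤ ∑' t : ℕ, ∑' τ : ℕ, β t * β τ * (1 - a) ^ ((t : ℤ) - (τ : ℤ)).natAbs := by
  have hb0 : 0 < 1 - a := by linarith
  have hb1 : 1 - a < 1 := by linarith
  set b : ℝ := 1 - a with hb
  have hb2 : 0 < 1 - b ^ 2 := by nlinarith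
  have hDpos : ∀ ω : ℝ, 0 < 1 + b ^ 2 - 2 * b * Real.cos ω := by
    intro ω; nlinarith [Real.cos_le_one ω, Real.neg_one_le_cos ω]
  have hexp_norm : ∀ (x : ℝ), ‖Complex.exp (Complex.I * (x : ℂ))‖ = 1 := by
    intro x
    rw [Complex.norm_exp]
    simp
  have hg_norm : ∀ (ω : ℝ) (t : ℕ), ‖(β t : ℂ) * Complex.exp (Complex.I * (ω : ℂ) * (t : ℂ))‖
      = |β t| := by
    intro ω t
    rw [norm_mul, Complex.norm_real, Real.norm_eq_abs]
    have : Complex.I * (ω : ℂ) * (t : ℂ) = Complex.I * ((ω * t : ℝ) : ℂ) := by push_cast; ring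
    rw [this, hexp_norm, mul_one]
  -- part 1
  have part1 : ∀ ω : ℝ, Summable fun t : ℕ =>
      ‖(β t : ℂ) * Complex.exp (Complex.I * (ω : ℂ) * (t : ℂ))‖ := by
    intro ω
    simpa only [hg_norm ω] using hβ
  -- part 2
  have hββ : Summable fun p : ℕ × ℕ => |β p.1| * |β p.2| :=
    hβ.mul_of_nonneg hβ (fun t => abs_nonneg _) (fun t => abs_nonneg _)
  have part2 : Summable (fun p : ℕ × ℕ =>
      |β p.1 * β p.2 * b ^ ((p.1 : ℤ) - (p.2 : ℤ)).natAbs|) := by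
    apply Summable.of_nonneg_of_le (fun p => abs_nonneg _) _ hββ
    intro p
    rw [abs_mul, abs_mul]
    have h1 : |b ^ ((p.1 : ℤ) - (p.2 : ℤ)).natAbs| ≤ 1 := by
      rw [abs_pow]
      apply pow_le_one₀ (abs_nonneg _)
      rw [abs_of_pos hb0]
      linarith
    calc |β p.1| * |β p.2| * |b ^ ((p.1 : ℤ) - (p.2 : ℤ)).natAbs|
        ≤ |β p.1| * |β p.2| * 1 := mul_le_mul_of_nonneg_left h1 (by positivity)
      _ = |β p.1| * |β p.2| := mul_one _
  -- denominator identity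
  have hden : ∀ ω : ℝ, ‖(1 : ℂ) - (a : ℂ) - Complex.exp (Complex.I * (ω : ℂ))‖ ^ 2
      = 1 + b ^ 2 - 2 * b * Real.cos ω := by
    intro ω
    rw [Complex.sq_norm, Complex.normSq_apply]
    have hre : ((1 : ℂ) - (a : ℂ) - Complex.exp (Complex.I * (ω : ℂ))).re = b - Real.cos ω := by
      simp [Complex.sub_re, hb, mul_comm Complex.I, Complex.exp_ofReal_mul_I_re]
    have him : ((1 : ℂ) - (a : ℂ) - Complex.exp (Complex.I * (ω : ℂ))).im = -Real.sin ω := by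
      simp [Complex.sub_im, mul_comm Complex.I, Complex.exp_ofReal_mul_I_im]
    rw [hre, him]
    have := Real.sin_sq_add_cos_sq ω
    nlinarith [this]
  -- numerator identity
  have hnum : ∀ ω : ℝ, ‖∑' t : ℕ, (β t : ℂ) * Complex.exp (Complex.I * (ω : ℂ) * (t : ℂ))‖ ^ 2
      = ∑' p : ℕ × ℕ, β p.1 * β p.2 * Real.cos (((p.1 : ℤ) - (p.2 : ℤ)) * ω) := by
    intro ω
    have h := norm_tsum_sq (fun t => (β t : ℂ) * Complex.exp (Complex.I * (ω : ℂ) * (t : ℂ)))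
      (part1 ω)
    rw [← h.tsum_eq]
    apply tsum_congr
    intro p
    have e1 : ((β p.1 : ℂ) * Complex.exp (Complex.I * (ω : ℂ) * (p.1 : ℂ))) *
        (starRingEnd ℂ) ((β p.2 : ℂ) * Complex.exp (Complex.I * (ω : ℂ) * (p.2 : ℂ))) =
        ((β p.1 * β p.2 : ℝ) : ℂ) *
          Complex.exp (Complex.I * ((((p.1 : ℤ) - (p.2 : ℤ)) * ω : ℝ) : ℂ)) := by
      rw [map_mul, Complex.conj_ofReal, ← Complex.exp_conj]
      rw [show (starRingEnd ℂ) (Complex.I * (ω : ℂ) * (p.2 : ℂ)) =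
          -(Complex.I * (ω : ℂ) * (p.2 : ℂ)) by
        simp [map_mul, Complex.conj_ofReal]]
      rw [mul_mul_mul_comm, ← Complex.exp_add]
      congr 1
      · push_cast; ring
      · congr 1; push_cast; ring
    simp only [e1]
    rw [Complex.re_ofReal_mul, mul_comm Complex.I, Complex.exp_ofReal_mul_I_re]
  -- the summand family
  set F : ℕ × ℕ → ℝ → ℝ := fun p ω =>
    β p.1 * β p.2 * Real.cos (((p.1 : ℤ) - (p.2 : ℤ)) * ω) / (1 + b ^ 2 - 2 * b * Real.cos ω)
    with hF
  have hpt : ∀ ω : ℝ,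
      ‖∑' t : ℕ, (β t : ℂ) * Complex.exp (Complex.I * (ω : ℂ) * (t : ℂ))‖ ^ 2 /
        ‖(1 : ℂ) - (a : ℂ) - Complex.exp (Complex.I * (ω : ℂ))‖ ^ 2 = ∑' p : ℕ × ℕ, F p ω := by
    intro ω
    rw [hnum ω, hden ω, ← tsum_div_const]
  have hmeas : ∀ p : ℕ × ℕ, AEStronglyMeasurable (F p) (volume.restrict (Set.Icc (-π) π)) := by
    intro p
    apply Continuous.aestronglyMeasurable ?_ |>.restrict
    exact Continuous.div (by fun_prop) (by fun_prop) (fun ω => (hDpos ω).ne')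
  have hbound : ∑' p : ℕ × ℕ, ∫⁻ ω in Set.Icc (-π) π, ‖F p ω‖₊ ∂volume ≠ ⊤ := by
    have h1 : ∀ p : ℕ × ℕ, ∫⁻ ω in Set.Icc (-π) π, ‖F p ω‖₊ ∂volume ≤
        ENNReal.ofReal ((|β p.1| * |β p.2| / a ^ 2) * (2 * π)) := by
      intro p
      have hbd : ∀ ω : ℝ, (‖F p ω‖₊ : ℝ≥0∞) ≤ ENNReal.ofReal (|β p.1| * |β p.2| / a ^ 2) := by
        intro ω
        rw [← ENNReal.ofReal_coe_nnreal, coe_nnnorm]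
        apply ENNReal.ofReal_le_ofReal
        rw [Real.norm_eq_abs, hF]
        simp only
        rw [abs_div, abs_of_pos (hDpos ω)]
        have hnum_le : |β p.1 * β p.2 * Real.cos (((p.1 : ℤ) - (p.2 : ℤ)) * ω)| ≤
            |β p.1| * |β p.2| := by
          rw [abs_mul, abs_mul]
          calc |β p.1| * |β p.2| * |Real.cos (((p.1 : ℤ) - (p.2 : ℤ)) * ω)|
              ≤ |β p.1| * |β p.2| * 1 :=
                mul_le_mul_of_nonneg_left (Real.abs_cos_le_one _) (by positivity)
            _ = |β p.1| * |β p.2| := mul_one _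
        have ha2 : a ^ 2 ≤ 1 + b ^ 2 - 2 * b * Real.cos ω := by
          nlinarith [Real.cos_le_one ω]
        calc |β p.1 * β p.2 * Real.cos (((p.1 : ℤ) - (p.2 : ℤ)) * ω)| /
              (1 + b ^ 2 - 2 * b * Real.cos ω)
            ≤ (|β p.1| * |β p.2|) / (1 + b ^ 2 - 2 * b * Real.cos ω) := by
              gcongr
              exact (hDpos ω).le
          _ ≤ (|β p.1| * |β p.2|) / a ^ 2 := by
              gcongr
      calc ∫⁻ ω in Set.Icc (-π) π, ‖F p ω‖₊ ∂volume
          ≤ ∫⁻ _ in Set.Icc (-π) π, ENNReal.ofReal (|β p.1| * |β p.2| / a ^ 2) ∂volume :=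
            lintegral_mono fun ω => hbd ω
        _ = ENNReal.ofReal (|β p.1| * |β p.2| / a ^ 2) * volume (Set.Icc (-π) π) :=
            setLIntegral_const _ _
        _ = ENNReal.ofReal ((|β p.1| * |β p.2| / a ^ 2) * (2 * π)) := by
            rw [Real.volume_Icc, show π - -π = 2 * π by ring,
              ← ENNReal.ofReal_mul (by positivity)]
    refine ne_top_of_le_ne_top ?_ (ENNReal.tsum_le_tsum h1)
    rw [← ENNReal.ofReal_tsum_of_nonneg (fun p => by positivity)
      (by exact (hββ.div_const (a ^ 2)).mul_right (2 * π))]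
    exact ENNReal.ofReal_ne_top
  have hswap : ∫ ω in Set.Icc (-π) π, (∑' p : ℕ × ℕ, F p ω) ∂volume =
      ∑' p : ℕ × ℕ, ∫ ω in Set.Icc (-π) π, F p ω ∂volume :=
    integral_tsum hmeas hbound
  have hI : ∀ p : ℕ × ℕ, ∫ ω in Set.Icc (-π) π, F p ω ∂volume =
      (2 * π / (1 - b ^ 2)) * (β p.1 * β p.2 * b ^ ((p.1 : ℤ) - (p.2 : ℤ)).natAbs) := by
    intro p
    have e : ∀ ω : ℝ, F p ω = (β p.1 * β p.2) *
        (Real.cos ((((p.1 : ℤ) - (p.2 : ℤ) : ℤ) : ℝ) * ω) / (1 + b ^ 2 - 2 * b * Real.cos ω)) := by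
      intro ω; rw [hF]; simp only; push_cast; ring
    rw [setIntegral_congr_fun measurableSet_Icc (fun ω _ => e ω),
      MeasureTheory.integral_const_mul, I_eq b hb0 hb1]
    ring
  -- summability of the real double sequence
  have hs_abs := part2
  have hs : Summable (fun p : ℕ × ℕ => β p.1 * β p.2 * b ^ ((p.1 : ℤ) - (p.2 : ℤ)).natAbs) :=
    hs_abs.of_abs
  set S : ℝ := ∑' p : ℕ × ℕ, β p.1 * β p.2 * b ^ ((p.1 : ℤ) - (p.2 : ℤ)).natAbs with hS
  have hiter : ∑' t : ℕ, ∑' τ : ℕ, β t * β τ * b ^ ((t : ℤ) - (τ : ℤ)).natAbs = S := by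
    have hinner : ∀ t : ℕ, Summable fun τ : ℕ => β t * β τ * b ^ ((t : ℤ) - (τ : ℤ)).natAbs := by
      intro t
      apply Summable.of_abs
      apply Summable.of_nonneg_of_le (fun τ => abs_nonneg _) _ (hβ.mul_left |β t|)
      intro τ
      rw [abs_mul, abs_mul]
      have h1 : |b ^ ((t : ℤ) - (τ : ℤ)).natAbs| ≤ 1 := by
        rw [abs_pow]
        apply pow_le_one₀ (abs_nonneg _)
        rw [abs_of_pos hb0]
        linarith
      calc |β t| * |β τ| * |b ^ ((t : ℤ) - (τ : ℤ)).natAbs|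
          ≤ |β t| * |β τ| * 1 := mul_le_mul_of_nonneg_left h1 (by positivity)
        _ = |β t| * |β τ| := mul_one _
    rw [hS, Summable.tsum_prod' hs (fun t => hinner t)]
  have hint : ∫ ω in Set.Icc (-π) π,
      ‖∑' t : ℕ, (β t : ℂ) * Complex.exp (Complex.I * (ω : ℂ) * (t : ℂ))‖ ^ 2 /
        ‖(1 : ℂ) - (a : ℂ) - Complex.exp (Complex.I * (ω : ℂ))‖ ^ 2 =
      (2 * π / (1 - b ^ 2)) * S := by
    rw [setIntegral_congr_fun measurableSet_Icc (fun ω _ => hpt ω), hswap, tsum_congr hI,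
      tsum_mul_left, hS]
  have hS0 : 0 ≤ S := by
    have hnn : 0 ≤ ∫ ω in Set.Icc (-π) π,
        ‖∑' t : ℕ, (β t : ℂ) * Complex.exp (Complex.I * (ω : ℂ) * (t : ℂ))‖ ^ 2 /
          ‖(1 : ℂ) - (a : ℂ) - Complex.exp (Complex.I * (ω : ℂ))‖ ^ 2 := by
      apply setIntegral_nonneg measurableSet_Icc
      intro ω _
      positivity
    rw [hint] at hnn
    have hc : 0 < 2 * π / (1 - b ^ 2) := by positivity
    nlinarith
  have hπ : 0 < π := pi_pos
  refine ⟨part1, part2, ?_, ?_⟩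
  · rw [hint, hiter]
    have e : a / (2 * π) * (2 * π / (1 - b ^ 2) * S) = a * S / (1 - b ^ 2) := by
      field_simp
    rw [e, hb]
    rw [le_div_iff₀ (by nlinarith : (0:ℝ) < 1 - (1 - a) ^ 2)]
    nlinarith [hS0, mul_nonneg hS0 (sq_nonneg a)]
  · rw [hint, hiter]
    have e : a / (2 * π) * (2 * π / (1 - b ^ 2) * S) = a * S / (1 - b ^ 2) := by
      field_simp
    rw [e, hb]
    rw [div_le_iff₀ (by nlinarith : (0:ℝ) < 1 - (1 - a) ^ 2)]
    nlinarith [hS0, mul_nonneg (mul_nonneg hS0 ha0.le) (by linarith : (0:ℝ) ≤ 1 - a)]
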